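/- Stability of the Volterra integral system with respect to right-hand-side perturbations (Theorem 1): Let ε > 0, let B(t, τ) be C¹ in t, F ∈ C¹ with F(0) = 0 and sup_{t≥0}‖F'(t)‖ ≤ ε. Write B₀(t) = B(t, t) and C(t, τ) = ∂_t B(t, τ). If for all 0 ≤ t' < t, Λ(B₀(t)) + (1/(t−t'))∫_{t'}^{t} ψ*(τ) dτ < 0 where ψ*(s) = ∫₀ˢ ‖C(s,τ)‖ dτ + ‖F'(s)‖/ε, then every solution X of X(t) = ∫₀ᵗ B(t,τ)X(τ)dτ + F(t) satisfies ‖X(t)‖ ≤ ε for all t ≥ 0. -/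

import Mathlib

set_option maxHeartbeats 1600000

open MeasureTheory


open scoped Topology
open Filter Set

noncomputable def logNorm {E : Type*} [NormedAddCommGroup E] [NormedSpace ℝ E]
    (K : E →L[ℝ] E) : ℝ :=
  sInf ((fun h : ℝ => (‖ContinuousLinearMap.id ℝ E + h • K‖ - 1) / h) '' Set.Ioi 0)

noncomputable def matNorm {n : ℕ} (A : Matrix (Fin n) (Fin n) ℝ) : ℝ :=
  ‖LinearMap.toContinuousLinearMap A.mulVecLin‖

noncomputable def matLogNorm {n : ℕ} (A : Matrix (Fin n) (Fin n) ℝ) : ℝ :=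
  logNorm (LinearMap.toContinuousLinearMap A.mulVecLin)

namespace VolterraAux


variable {E : Type*} [NormedAddCommGroup E] [NormedSpace ℝ E]

/-- The difference quotient whose infimum is the logarithmic norm. -/
noncomputable def qfun (K : E →L[ℝ] E) (h : ℝ) : ℝ :=
  (‖ContinuousLinearMap.id ℝ E + h • K‖ - 1) / h

lemma logNorm_eq_sInf (K : E →L[ℝ] E) : logNorm K = sInf (qfun K '' Set.Ioi 0) := rfl

lemma qfun_mono (K : E →L[ℝ] E) {h h' : ℝ} (h0 : 0 < h) (hh : h ≤ h') :
    qfun K h ≤ qfun K h' := by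
  have h'0 : 0 < h' := h0.trans_le hh
  have hdecomp : ContinuousLinearMap.id ℝ E + h • K
      = (1 - h / h') • ContinuousLinearMap.id ℝ E
        + (h / h') • (ContinuousLinearMap.id ℝ E + h' • K) := by
    have : h / h' * h' = h := div_mul_cancel₀ h h'0.ne'
    rw [smul_add, smul_smul, this, ← add_assoc, ← add_smul]
    norm_num
  have hnorm : ‖ContinuousLinearMap.id ℝ E + h • K‖
      ≤ (1 - h / h') + (h / h') * ‖ContinuousLinearMap.id ℝ E + h' • K‖ := by
    rw [hdecomp]
    refine (norm_add_le _ _).trans ?_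
    have e1 : ‖(1 - h / h') • (ContinuousLinearMap.id ℝ E)‖ ≤ 1 - h / h' := by
      have e := norm_smul (1 - h / h') (ContinuousLinearMap.id ℝ E)
      rw [e, Real.norm_eq_abs, abs_of_nonneg (by
        rw [sub_nonneg]; exact div_le_one_of_le₀ hh h'0.le)]
      exact mul_le_of_le_one_right (by rw [sub_nonneg]; exact div_le_one_of_le₀ hh h'0.le)
        (ContinuousLinearMap.norm_id_le)
    have e2 : ‖(h / h') • (ContinuousLinearMap.id ℝ E + h' • K)‖
        = (h / h') * ‖ContinuousLinearMap.id ℝ E + h' • K‖ := by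
      have e := norm_smul (h / h') (ContinuousLinearMap.id ℝ E + h' • K)
      rw [e, Real.norm_eq_abs, abs_of_nonneg (div_nonneg h0.le h'0.le)]
    rw [e2]
    linarith
  unfold qfun
  rw [div_le_div_iff₀ h0 h'0]
  have hq : (‖ContinuousLinearMap.id ℝ E + h • K‖ - 1)
      ≤ (h / h') * (‖ContinuousLinearMap.id ℝ E + h' • K‖ - 1) := by
    have : (h / h') * (‖ContinuousLinearMap.id ℝ E + h' • K‖ - 1)
        = (1 - h/h') + (h/h') * ‖ContinuousLinearMap.id ℝ E + h' • K‖ - 1 := by ring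
    rw [this]
    linarith [hnorm]
  calc (‖ContinuousLinearMap.id ℝ E + h • K‖ - 1) * h'
      ≤ ((h / h') * (‖ContinuousLinearMap.id ℝ E + h' • K‖ - 1)) * h' := by
        exact mul_le_mul_of_nonneg_right hq h'0.le
    _ = (‖ContinuousLinearMap.id ℝ E + h' • K‖ - 1) * h := by
        field_simp

lemma qfun_lower [Nontrivial E] (K : E →L[ℝ] E) {h : ℝ} (h0 : 0 < h) :
    -‖K‖ ≤ qfun K h := by
  have h1 : (1 : ℝ) - h * ‖K‖ ≤ ‖ContinuousLinearMap.id ℝ E + h • K‖ := by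
    have h2 : ‖ContinuousLinearMap.id ℝ E‖
        ≤ ‖ContinuousLinearMap.id ℝ E + h • K‖ + ‖h • K‖ := by
      have h3 := norm_add_le (ContinuousLinearMap.id ℝ E + h • K) (-(h • K))
      simpa using h3
    rw [ContinuousLinearMap.norm_id] at h2
    have hs : ‖h • K‖ = h * ‖K‖ := by
      have e := norm_smul h K
      rw [e, Real.norm_eq_abs, abs_of_pos h0]
    linarith
  unfold qfun
  rw [le_div_iff₀ h0]
  nlinarith

lemma bddBelow_qfun [Nontrivial E] (K : E →L[ℝ] E) :
    BddBelow (qfun K '' Set.Ioi 0) := by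
  refine ⟨-‖K‖, ?_⟩
  rintro _ ⟨h, h0, rfl⟩
  exact qfun_lower K h0

lemma nonempty_qfun (K : E →L[ℝ] E) : (qfun K '' Set.Ioi 0).Nonempty :=
  ⟨qfun K 1, ⟨1, by norm_num, rfl⟩⟩

lemma logNorm_le_qfun [Nontrivial E] (K : E →L[ℝ] E) {h : ℝ} (h0 : 0 < h) :
    logNorm K ≤ qfun K h := by
  rw [logNorm_eq_sInf]
  exact csInf_le (bddBelow_qfun K) ⟨h, h0, rfl⟩

lemma exists_qfun_lt [Nontrivial E] (K : E →L[ℝ] E) {r : ℝ} (hr : logNorm K < r) :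
    ∃ h : ℝ, 0 < h ∧ qfun K h < r := by
  rw [logNorm_eq_sInf] at hr
  obtain ⟨_, ⟨h, h0, rfl⟩, hlt⟩ := (csInf_lt_iff (bddBelow_qfun K) (nonempty_qfun K)).1 hr
  exact ⟨h, h0, hlt⟩

lemma logNorm_le_add [Nontrivial E] (K K' : E →L[ℝ] E) :
    logNorm K ≤ logNorm K' + ‖K - K'‖ := by
  have hq : ∀ h : ℝ, 0 < h → qfun K h ≤ qfun K' h + ‖K - K'‖ := by
    intro h h0
    have hnorm : ‖ContinuousLinearMap.id ℝ E + h • K‖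
        ≤ ‖ContinuousLinearMap.id ℝ E + h • K'‖ + h * ‖K - K'‖ := by
      have : ContinuousLinearMap.id ℝ E + h • K
          = (ContinuousLinearMap.id ℝ E + h • K') + h • (K - K') := by
        rw [smul_sub]; abel
      rw [this]
      refine (norm_add_le _ _).trans ?_
      have e : ‖h • (K - K')‖ = h * ‖K - K'‖ := by
        have e2 := norm_smul h (K - K')
        rw [e2, Real.norm_eq_abs, abs_of_pos h0]
      rw [e]
    unfold qfun
    rw [div_add' _ _ _ h0.ne', div_le_div_iff₀ h0 h0]
    nlinarith
  have : ∀ h : ℝ, 0 < h → logNorm K - ‖K - K'‖ ≤ qfun K' h := by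
    intro h h0
    have := (logNorm_le_qfun K h0).trans (hq h h0)
    linarith
  have hle : logNorm K - ‖K - K'‖ ≤ logNorm K' := by
    rw [logNorm_eq_sInf]
    refine le_csInf (nonempty_qfun K') ?_
    rintro _ ⟨h, h0, rfl⟩
    exact this h h0
  linarith

lemma lipschitzWith_logNorm [Nontrivial E] :
    LipschitzWith 1 (logNorm : (E →L[ℝ] E) → ℝ) := by
  refine LipschitzWith.of_dist_le_mul fun K K' => ?_
  rw [NNReal.coe_one, one_mul, Real.dist_eq, dist_eq_norm, abs_sub_le_iff]
  constructor
  · linarith [logNorm_le_add K K']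
  · have := logNorm_le_add K' K
    rw [← neg_sub K K', norm_neg] at this
    linarith



noncomputable def matCLM (n : ℕ) :
    Matrix (Fin n) (Fin n) ℝ →ₗ[ℝ] ((Fin n → ℝ) →L[ℝ] (Fin n → ℝ)) where
  toFun A := LinearMap.toContinuousLinearMap A.mulVecLin
  map_add' A B := by ext v i; simp [Matrix.add_mulVec]
  map_smul' c A := by ext v i; simp [Matrix.smul_mulVec]

lemma matCLM_apply {n : ℕ} (A : Matrix (Fin n) (Fin n) ℝ) (v : Fin n → ℝ) :
    matCLM n A v = A.mulVec v := rfl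

lemma matNorm_eq {n : ℕ} (A : Matrix (Fin n) (Fin n) ℝ) : matNorm A = ‖matCLM n A‖ := rfl

lemma matLogNorm_eq {n : ℕ} (A : Matrix (Fin n) (Fin n) ℝ) :
    matLogNorm A = logNorm (matCLM n A) := rfl

lemma matNorm_nonneg {n : ℕ} (A : Matrix (Fin n) (Fin n) ℝ) : 0 ≤ matNorm A :=
  norm_nonneg _

lemma norm_mulVec_le {n : ℕ} (A : Matrix (Fin n) (Fin n) ℝ) (v : Fin n → ℝ) :
    ‖A.mulVec v‖ ≤ matNorm A * ‖v‖ := by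
  have := (matCLM n A).le_opNorm v
  rwa [matCLM_apply] at this

lemma matCLM_continuous (n : ℕ) : Continuous (matCLM n) :=
  (matCLM n).continuous_of_finiteDimensional

lemma hasDerivAt_mulVec {n : ℕ} {Bf : ℝ → Matrix (Fin n) (Fin n) ℝ}
    {C0 : Matrix (Fin n) (Fin n) ℝ} {u : ℝ}
    (hd : ∀ i j, HasDerivAt (fun s => Bf s i j) (C0 i j) u) (v : Fin n → ℝ) :
    HasDerivAt (fun s => (Bf s).mulVec v) (C0.mulVec v) u := by
  rw [hasDerivAt_pi]
  intro i
  simp only [Matrix.mulVec, dotProduct]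
  exact HasDerivAt.fun_sum fun j _ => (hd i j).mul_const (v j)



lemma Sclosed : IsClosed {p : ℝ × ℝ | 0 ≤ p.2 ∧ p.2 ≤ p.1} :=
  (isClosed_le continuous_const continuous_snd).inter
    (isClosed_le continuous_snd continuous_fst)

lemma contOn_nC {n : ℕ} {C : ℝ → ℝ → Matrix (Fin n) (Fin n) ℝ}
    (hC : ContinuousOn (fun p : ℝ × ℝ => C p.1 p.2) {p : ℝ × ℝ | 0 ≤ p.2 ∧ p.2 ≤ p.1}) :
    ContinuousOn (fun p : ℝ × ℝ => matNorm (C p.1 p.2)) {p : ℝ × ℝ | 0 ≤ p.2 ∧ p.2 ≤ p.1} :=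
  (((matCLM_continuous n).comp_continuousOn hC).norm : _)

/-- Uniform-continuity estimate to the right of `x`. -/
lemma nC_right_est {n : ℕ} {C : ℝ → ℝ → Matrix (Fin n) (Fin n) ℝ}
    (hC : ContinuousOn (fun p : ℝ × ℝ => C p.1 p.2) {p : ℝ × ℝ | 0 ≤ p.2 ∧ p.2 ≤ p.1})
    {x : ℝ} (hx : 0 ≤ x) {η : ℝ} (hη : 0 < η) :
    ∃ δ > 0, δ ≤ 1 ∧ ∀ u τ : ℝ, 0 ≤ τ → τ ≤ x → x ≤ u → u - x < δ →
      matNorm (C u τ) ≤ matNorm (C x τ) + η := by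
  set S : Set (ℝ × ℝ) := {p : ℝ × ℝ | 0 ≤ p.2 ∧ p.2 ≤ p.1} with hS
  set K : Set (ℝ × ℝ) := S ∩ (Icc 0 (x+1) ×ˢ Icc 0 (x+1)) with hKdef
  have hKcomp : IsCompact K := ((isCompact_Icc.prod isCompact_Icc).inter_left Sclosed)
  have hUC := hKcomp.uniformContinuousOn_of_continuous ((contOn_nC hC).mono inter_subset_left)
  obtain ⟨δ₁, hδ₁, hδ⟩ := Metric.uniformContinuousOn_iff.mp hUC η hη
  refine ⟨min δ₁ 1, by positivity, min_le_right _ _, ?_⟩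
  intro u τ hτ0 hτx hxu hux
  have hu1 : u ≤ x + 1 := by
    have := lt_of_lt_of_le hux (min_le_right _ _); linarith
  have hmem1 : (u, τ) ∈ K := by
    refine ⟨⟨hτ0, hτx.trans hxu⟩, ⟨⟨hτ0.trans (hτx.trans hxu), hu1⟩, ⟨hτ0, by linarith⟩⟩⟩
  have hmem2 : (x, τ) ∈ K := by
    refine ⟨⟨hτ0, hτx⟩, ⟨⟨hx, by linarith⟩, ⟨hτ0, by linarith⟩⟩⟩
  have hdist : dist (u, τ) (x, τ) < δ₁ := by
    rw [Prod.dist_eq]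
    simp only [dist_self]
    rw [max_eq_left dist_nonneg, Real.dist_eq, abs_of_nonneg (by linarith)]
    exact lt_of_lt_of_le hux (min_le_left _ _)
  have := hδ _ hmem1 _ hmem2 hdist
  rw [Real.dist_eq] at this
  have := abs_lt.mp this
  linarith [this.2]

/-- Left-continuity estimate for `s ↦ ∫_0^s matNorm (C s τ) dτ`. -/
lemma cf_left_est {n : ℕ} {C : ℝ → ℝ → Matrix (Fin n) (Fin n) ℝ}
    (hC : ContinuousOn (fun p : ℝ × ℝ => C p.1 p.2) {p : ℝ × ℝ | 0 ≤ p.2 ∧ p.2 ≤ p.1})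
    {x : ℝ} (hx : 0 < x) {η : ℝ} (hη : 0 < η) :
    ∃ δ > 0, ∀ s, 0 ≤ s → s ≤ x → x - s < δ →
      (∫ τ in (0:ℝ)..x, matNorm (C x τ)) - η ≤ ∫ τ in (0:ℝ)..s, matNorm (C s τ) := by
  set S : Set (ℝ × ℝ) := {p : ℝ × ℝ | 0 ≤ p.2 ∧ p.2 ≤ p.1} with hS
  set K : Set (ℝ × ℝ) := S ∩ (Icc 0 x ×ˢ Icc 0 x) with hKdef
  have hKcomp : IsCompact K := ((isCompact_Icc.prod isCompact_Icc).inter_left Sclosed)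
  have hcont : ContinuousOn (fun p : ℝ × ℝ => matNorm (C p.1 p.2)) K :=
    (contOn_nC hC).mono inter_subset_left
  have hUC := hKcomp.uniformContinuousOn_of_continuous hcont
  obtain ⟨Mb, hMb⟩ := hKcomp.exists_bound_of_continuousOn hcont
  have hMb0 : 0 ≤ Mb := by
    have := hMb (x, x) ⟨⟨hx.le, le_rfl⟩, ⟨⟨hx.le, le_rfl⟩, ⟨hx.le, le_rfl⟩⟩⟩
    exact le_trans (norm_nonneg _) this
  have hη₁ : (0:ℝ) < η/(2*(x+1)) := by positivity
  obtain ⟨δ₁, hδ₁, hδ⟩ := Metric.uniformContinuousOn_iff.mp hUC _ hη₁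
  refine ⟨min δ₁ (η/(2*(Mb+1))), by positivity, ?_⟩
  intro s hs0 hsx hxs
  -- continuity of the slices
  have hslice : ∀ w : ℝ, 0 ≤ w → w ≤ x → ContinuousOn (fun τ => matNorm (C w τ)) (Icc 0 w) := by
    intro w hw0 hwx
    have h1 : ContinuousOn (fun τ : ℝ => (w, τ)) (Icc 0 w) :=
      (continuous_const.prodMk continuous_id).continuousOn
    have h2 := (contOn_nC hC).comp h1 (fun τ hτ => ⟨hτ.1, hτ.2⟩)
    simpa [Function.comp_def] using h2
  have hi1 : IntervalIntegrable (fun τ => matNorm (C x τ)) MeasureTheory.volume 0 s := by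
    refine ((hslice x hx.le le_rfl).mono ?_).intervalIntegrable
    rw [uIcc_of_le hs0]; exact Icc_subset_Icc le_rfl hsx
  have hi2 : IntervalIntegrable (fun τ => matNorm (C x τ)) MeasureTheory.volume s x := by
    refine ((hslice x hx.le le_rfl).mono ?_).intervalIntegrable
    rw [uIcc_of_le hsx]; exact Icc_subset_Icc hs0 le_rfl
  have hi3 : IntervalIntegrable (fun τ => matNorm (C s τ)) MeasureTheory.volume 0 s := by
    refine ((hslice s hs0 hsx).mono ?_).intervalIntegrable
    rw [uIcc_of_le hs0]
  have hsplit : (∫ τ in (0:ℝ)..x, matNorm (C x τ))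
      = (∫ τ in (0:ℝ)..s, matNorm (C x τ)) + ∫ τ in s..x, matNorm (C x τ) :=
    (intervalIntegral.integral_add_adjacent_intervals hi1 hi2).symm
  have hdiff : (∫ τ in (0:ℝ)..s, matNorm (C x τ)) - (∫ τ in (0:ℝ)..s, matNorm (C s τ))
      = ∫ τ in (0:ℝ)..s, (matNorm (C x τ) - matNorm (C s τ)) :=
    (intervalIntegral.integral_sub hi1 hi3).symm
  have hbound1 : ‖∫ τ in (0:ℝ)..s, (matNorm (C x τ) - matNorm (C s τ))‖
      ≤ η/(2*(x+1)) * |s - 0| := by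
    refine intervalIntegral.norm_integral_le_of_norm_le_const ?_
    intro τ hτ
    rw [uIoc_of_le hs0] at hτ
    have hmem1 : (x, τ) ∈ K := ⟨⟨hτ.1.le, hτ.2.trans hsx⟩,
      ⟨⟨hx.le, le_rfl⟩, ⟨hτ.1.le, hτ.2.trans hsx⟩⟩⟩
    have hmem2 : (s, τ) ∈ K := ⟨⟨hτ.1.le, hτ.2⟩, ⟨⟨hs0, hsx⟩, ⟨hτ.1.le, hτ.2.trans hsx⟩⟩⟩
    have hdist : dist (x, τ) (s, τ) < δ₁ := by
      rw [Prod.dist_eq]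
      simp only [dist_self]
      rw [max_eq_left dist_nonneg, Real.dist_eq, abs_of_nonneg (by linarith)]
      exact lt_of_lt_of_le hxs (min_le_left _ _)
    have := hδ _ hmem1 _ hmem2 hdist
    rw [Real.dist_eq] at this
    exact this.le
  have hbound2 : ‖∫ τ in s..x, matNorm (C x τ)‖ ≤ Mb * |x - s| := by
    refine intervalIntegral.norm_integral_le_of_norm_le_const ?_
    intro τ hτ
    rw [uIoc_of_le hsx] at hτ
    exact hMb (x, τ) ⟨⟨hs0.trans hτ.1.le, hτ.2⟩, ⟨⟨hx.le, le_rfl⟩, ⟨hs0.trans hτ.1.le, hτ.2⟩⟩⟩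
  rw [hsplit]
  have e1 : |s - 0| = s := by rw [sub_zero, abs_of_nonneg hs0]
  have e2 : |x - s| = x - s := abs_of_nonneg (by linarith)
  rw [e1] at hbound1; rw [e2] at hbound2
  have h1 := (abs_le.mp ((Real.norm_eq_abs _) ▸ hbound1)).2
  have h1' := (abs_le.mp ((Real.norm_eq_abs _) ▸ hbound1)).1
  have h2 := (abs_le.mp ((Real.norm_eq_abs _) ▸ hbound2)).2
  have hxsδ : x - s < η/(2*(Mb+1)) := lt_of_lt_of_le hxs (min_le_right _ _)
  have key1 : (∫ τ in (0:ℝ)..s, matNorm (C x τ)) - (∫ τ in (0:ℝ)..s, matNorm (C s τ))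
      ≤ η/(2*(x+1)) * s := by rw [hdiff]; exact h1
  have key2 : (∫ τ in s..x, matNorm (C x τ)) ≤ Mb * (x - s) := h2
  have e3 : η/(2*(x+1)) * s ≤ η/2 := by
    rw [div_mul_eq_mul_div, div_le_div_iff₀ (by positivity) (by norm_num)]
    nlinarith
  have e4 : Mb * (x - s) ≤ η/2 := by
    have : Mb * (x - s) ≤ (Mb + 1) * (η/(2*(Mb+1))) := by
      apply mul_le_mul (by linarith) hxsδ.le (by linarith) (by linarith)
    calc Mb * (x - s) ≤ (Mb + 1) * (η/(2*(Mb+1))) := this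
      _ = η/2 := by field_simp
  linarith



lemma qfun_def {E : Type*} [NormedAddCommGroup E] [NormedSpace ℝ E] (K : E →L[ℝ] E) (h : ℝ) :
    qfun K h = (‖ContinuousLinearMap.id ℝ E + h • K‖ - 1) / h := rfl

lemma slope_est {n : ℕ} [Nonempty (Fin n)] {B C : ℝ → ℝ → Matrix (Fin n) (Fin n) ℝ}
    (hB : ContinuousOn (fun p : ℝ × ℝ => B p.1 p.2) {p : ℝ × ℝ | 0 ≤ p.2 ∧ p.2 ≤ p.1})
    (hBt : ∀ τ t : ℝ, 0 ≤ τ → τ ≤ t → ∀ i j,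
      HasDerivAt (fun u => B u τ i j) (C t τ i j) t)
    (hC : ContinuousOn (fun p : ℝ × ℝ => C p.1 p.2) {p : ℝ × ℝ | 0 ≤ p.2 ∧ p.2 ≤ p.1})
    {F F' X : ℝ → (Fin n → ℝ)}
    (hF : ∀ t : ℝ, HasDerivAt F (F' t) t) (hF'c : Continuous F')
    (hXc : ContinuousOn X (Set.Ici 0))
    (hX : ∀ t : ℝ, 0 ≤ t → X t = (∫ τ in (0 : ℝ)..t, (B t τ).mulVec (X τ)) + F t)
    {M x : ℝ} (hM0 : 0 < M) (hx0 : 0 ≤ x)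
    (hMb : ∀ τ : ℝ, 0 ≤ τ → τ ≤ x → ‖X τ‖ ≤ M)
    {r : ℝ}
    (hr : matLogNorm (B x x) * ‖X x‖ + M * (∫ σ in (0 : ℝ)..x, matNorm (C x σ)) + ‖F' x‖ < r) :
    ∃ᶠ z in 𝓝[>] x, slope (fun s => ‖X s‖) x z < r := by
  set η : ℝ := (r - (matLogNorm (B x x) * ‖X x‖
    + M * (∫ σ in (0 : ℝ)..x, matNorm (C x σ)) + ‖F' x‖)) / 5 with hηdef
  have hη : 0 < η := by rw [hηdef]; linarith
  have hr5 : r = matLogNorm (B x x) * ‖X x‖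
      + M * (∫ σ in (0 : ℝ)..x, matNorm (C x σ)) + ‖F' x‖ + 5 * η := by
    rw [hηdef]; ring
  have hmx0 : (0:ℝ) ≤ ‖X x‖ := norm_nonneg _
  -- choice of h₀
  obtain ⟨h₀, hh₀, hq₀⟩ : ∃ h₀ : ℝ, 0 < h₀ ∧
      qfun (matCLM n (B x x)) h₀ * ‖X x‖ ≤ matLogNorm (B x x) * ‖X x‖ + η := by
    rcases eq_or_lt_of_le hmx0 with h0 | h0
    · exact ⟨1, one_pos, by rw [← h0]; simp; linarith⟩
    · have hlt : logNorm (matCLM n (B x x))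
          < logNorm (matCLM n (B x x)) + η / ‖X x‖ := by
        have : 0 < η / ‖X x‖ := by positivity
        linarith
      obtain ⟨h₀, hh₀, hq⟩ := exists_qfun_lt (matCLM n (B x x)) hlt
      refine ⟨h₀, hh₀, ?_⟩
      have h2 := mul_le_mul_of_nonneg_right hq.le hmx0
      have h3 : (logNorm (matCLM n (B x x)) + η / ‖X x‖) * ‖X x‖
          = logNorm (matCLM n (B x x)) * ‖X x‖ + η := by
        field_simp
      rw [h3] at h2
      rw [matLogNorm_eq]
      exact h2
  -- continuity of the integrand at the diagonal point (x,x)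
  have hGc : ContinuousOn (fun p : ℝ × ℝ => (B p.1 p.2).mulVec (X p.2))
      {p : ℝ × ℝ | 0 ≤ p.2 ∧ p.2 ≤ p.1} := by
    have h1 : ContinuousOn (fun p : ℝ × ℝ => matCLM n (B p.1 p.2))
        {p : ℝ × ℝ | 0 ≤ p.2 ∧ p.2 ≤ p.1} :=
      (matCLM_continuous n).comp_continuousOn hB
    have h2 : ContinuousOn (fun p : ℝ × ℝ => X p.2)
        {p : ℝ × ℝ | 0 ≤ p.2 ∧ p.2 ≤ p.1} :=
      hXc.comp continuous_snd.continuousOn (fun p hp => hp.1)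
    exact h1.clm_apply h2
  have hGxx := hGc (x, x) ⟨hx0, le_rfl⟩
  rw [Metric.continuousWithinAt_iff] at hGxx
  obtain ⟨δ₁, hδ₁, hG⟩ := hGxx η hη
  -- uniform continuity bound for C to the right
  have hη₂ : (0:ℝ) < η / (M * (x+1)) := by positivity
  obtain ⟨δ₂, hδ₂, hδ₂le1, hnC⟩ := nC_right_est hC hx0 hη₂
  -- F' bound near x
  have hF'ev : ∀ᶠ u in 𝓝 x, ‖F' u‖ < ‖F' x‖ + η := by
    have hcont : ContinuousAt (fun u => ‖F' u‖) x := (hF'c.norm).continuousAt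
    exact hcont.eventually_lt_const (by linarith)
  obtain ⟨δ₃, hδ₃, hF'δ⟩ := Metric.eventually_nhds_iff.mp hF'ev
  set δ : ℝ := min (min δ₁ δ₂) (min h₀ δ₃) with hδdef
  have hδpos : 0 < δ := by
    rw [hδdef]; positivity
  have hmem : Ioo x (x + δ) ∈ 𝓝[>] x :=
    Ioo_mem_nhdsGT_of_mem ⟨le_rfl, by linarith⟩
  refine Filter.Eventually.frequently (Filter.eventually_of_mem hmem ?_)
  intro z hz
  obtain ⟨hxz, hzδ⟩ := hz
  have hz0 : (0:ℝ) ≤ z := le_trans hx0 hxz.le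
  have hzx0 : 0 < z - x := by linarith
  have hzxδ : z - x < δ := by linarith
  -- slice continuity
  have hslice : ∀ w : ℝ, 0 ≤ w →
      ContinuousOn (fun τ => (B w τ).mulVec (X τ)) (Icc 0 w) := by
    intro w hw0
    have h1 : ContinuousOn (fun τ : ℝ => ((w : ℝ), τ)) (Icc 0 w) :=
      (continuous_const.prodMk continuous_id).continuousOn
    have h2 := hGc.comp h1 (fun τ hτ => ⟨hτ.1, hτ.2⟩)
    simpa [Function.comp_def] using h2
  have I1 : IntervalIntegrable (fun τ => (B z τ).mulVec (X τ)) volume 0 x := by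
    refine ((hslice z hz0).mono ?_).intervalIntegrable
    rw [uIcc_of_le hx0]; exact Icc_subset_Icc le_rfl hxz.le
  have I2 : IntervalIntegrable (fun τ => (B z τ).mulVec (X τ)) volume x z := by
    refine ((hslice z hz0).mono ?_).intervalIntegrable
    rw [uIcc_of_le hxz.le]; exact Icc_subset_Icc hx0 le_rfl
  have I3 : IntervalIntegrable (fun τ => (B x τ).mulVec (X τ)) volume 0 x := by
    refine ((hslice x hx0).mono ?_).intervalIntegrable
    rw [uIcc_of_le hx0]
  -- the decomposition identity
  have e1 : (∫ τ in (0:ℝ)..z, (B z τ).mulVec (X τ))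
      = (∫ τ in (0:ℝ)..x, (B z τ).mulVec (X τ))
        + ∫ τ in x..z, (B z τ).mulVec (X τ) :=
    (intervalIntegral.integral_add_adjacent_intervals I1 I2).symm
  have e2 : (∫ τ in (0:ℝ)..x, (B z τ).mulVec (X τ))
        - (∫ τ in (0:ℝ)..x, (B x τ).mulVec (X τ))
      = ∫ τ in (0:ℝ)..x, ((B z τ).mulVec (X τ) - (B x τ).mulVec (X τ)) :=
    (intervalIntegral.integral_sub I1 I3).symm
  have hXid : X z = (X x + (z - x) • (B x x).mulVec (X x))
      + (((∫ τ in x..z, (B z τ).mulVec (X τ)) - (z - x) • (B x x).mulVec (X x))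
      + ((∫ τ in (0:ℝ)..x, ((B z τ).mulVec (X τ) - (B x τ).mulVec (X τ)))
      + (F z - F x))) := by
    rw [hX z hz0, e1, ← e2, hX x hx0]
    abel
  -- norm inequality
  have hnorm : ‖X z‖ ≤ ‖X x + (z - x) • (B x x).mulVec (X x)‖
      + (‖(∫ τ in x..z, (B z τ).mulVec (X τ)) - (z - x) • (B x x).mulVec (X x)‖
      + (‖∫ τ in (0:ℝ)..x, ((B z τ).mulVec (X τ) - (B x τ).mulVec (X τ))‖
      + ‖F z - F x‖)) := by
    rw [hXid]
    refine (norm_add_le _ _).trans ?_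
    gcongr
    refine (norm_add_le _ _).trans ?_
    gcongr
    exact norm_add_le _ _
  -- the A-term
  have hA : ‖X x + (z - x) • (B x x).mulVec (X x)‖
      ≤ (1 + (z - x) * qfun (matCLM n (B x x)) (z - x)) * ‖X x‖ := by
    have e : X x + (z - x) • (B x x).mulVec (X x)
        = (ContinuousLinearMap.id ℝ (Fin n → ℝ) + (z - x) • matCLM n (B x x)) (X x) := by
      simp [ContinuousLinearMap.add_apply, ContinuousLinearMap.smul_apply, matCLM_apply]
    rw [e]
    refine le_trans (ContinuousLinearMap.le_opNorm _ _) ?_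
    have eN : 1 + (z - x) * qfun (matCLM n (B x x)) (z - x)
        = ‖ContinuousLinearMap.id ℝ (Fin n → ℝ) + (z - x) • matCLM n (B x x)‖ := by
      rw [qfun_def]
      field_simp
      ring
    rw [eN]
  -- R1 bound
  have hR1 : ‖(∫ τ in x..z, (B z τ).mulVec (X τ)) - (z - x) • (B x x).mulVec (X x)‖
      ≤ η * (z - x) := by
    have ec : (z - x) • (B x x).mulVec (X x)
        = ∫ _ in x..z, (B x x).mulVec (X x) := by
      rw [intervalIntegral.integral_const]
    rw [ec, ← intervalIntegral.integral_sub I2 intervalIntegrable_const]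
    have hb : ∀ τ ∈ Set.uIoc x z,
        ‖(B z τ).mulVec (X τ) - (B x x).mulVec (X x)‖ ≤ η := by
      intro τ hτ
      rw [Set.uIoc_of_le hxz.le] at hτ
      have hmemS : (z, τ) ∈ {p : ℝ × ℝ | 0 ≤ p.2 ∧ p.2 ≤ p.1} :=
        ⟨by linarith [hτ.1], hτ.2⟩
      have hd : dist (z, τ) (x, x) < δ₁ := by
        rw [Prod.dist_eq, Real.dist_eq, Real.dist_eq]
        have hδ1' : δ ≤ δ₁ := le_trans (min_le_left _ _) (min_le_left _ _)
        rw [abs_of_nonneg (by linarith), abs_of_nonneg (by linarith [hτ.1])]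
        exact max_lt (by linarith) (by linarith [hτ.2])
      have := hG hmemS hd
      rw [dist_eq_norm] at this
      exact this.le
    have := intervalIntegral.norm_integral_le_of_norm_le_const hb
    rwa [abs_of_nonneg (by linarith)] at this
  -- R2 bound
  have hcfnonneg : 0 ≤ ∫ σ in (0:ℝ)..x, matNorm (C x σ) := by
    apply intervalIntegral.integral_nonneg hx0
    intro σ _
    exact matNorm_nonneg _
  have hR2 : ‖∫ τ in (0:ℝ)..x, ((B z τ).mulVec (X τ) - (B x τ).mulVec (X τ))‖
      ≤ (M * (∫ σ in (0:ℝ)..x, matNorm (C x σ)) + η) * (z - x) := by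
    have hCslice : ∀ τ : ℝ, 0 ≤ τ → τ ≤ x →
        ContinuousOn (fun u => (C u τ).mulVec (X τ)) (Icc x z) := by
      intro τ hτ0 hτx
      have h1 : ContinuousOn (fun u : ℝ => ((u : ℝ), τ)) (Icc x z) :=
        (continuous_id.prodMk continuous_const).continuousOn
      have h2 : ContinuousOn (fun p : ℝ × ℝ => (C p.1 p.2).mulVec (X τ))
          {p : ℝ × ℝ | 0 ≤ p.2 ∧ p.2 ≤ p.1} := by
        have hm : ContinuousOn (fun p : ℝ × ℝ => matCLM n (C p.1 p.2))
            {p : ℝ × ℝ | 0 ≤ p.2 ∧ p.2 ≤ p.1} :=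
          (matCLM_continuous n).comp_continuousOn hC
        exact hm.clm_apply continuousOn_const
      have h3 := h2.comp h1 (fun u hu => ⟨hτ0, le_trans hτx hu.1⟩)
      simpa [Function.comp_def] using h3
    have hpt : ∀ τ ∈ Icc (0:ℝ) x,
        ‖(B z τ).mulVec (X τ) - (B x τ).mulVec (X τ)‖
        ≤ (M * (matNorm (C x τ) + η / (M * (x+1)))) * (z - x) := by
      intro τ hτ
      have hderiv : ∀ u ∈ uIcc x z,
          HasDerivAt (fun w => (B w τ).mulVec (X τ)) ((C u τ).mulVec (X τ)) u := by
        intro u hu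
        rw [uIcc_of_le hxz.le] at hu
        exact hasDerivAt_mulVec (fun i j => hBt τ u hτ.1 (le_trans hτ.2 hu.1) i j) (X τ)
      have hint' : IntervalIntegrable (fun u => (C u τ).mulVec (X τ)) volume x z :=
        ((hCslice τ hτ.1 hτ.2).mono (by rw [uIcc_of_le hxz.le])).intervalIntegrable
      have hftc := intervalIntegral.integral_eq_sub_of_hasDerivAt hderiv hint'
      rw [show (B z τ).mulVec (X τ) - (B x τ).mulVec (X τ)
        = ∫ u in x..z, (C u τ).mulVec (X τ) from hftc.symm]
      have hb : ∀ u ∈ Set.uIoc x z, ‖(C u τ).mulVec (X τ)‖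
          ≤ M * (matNorm (C x τ) + η / (M * (x+1))) := by
        intro u hu
        rw [Set.uIoc_of_le hxz.le] at hu
        have h1 : ‖(C u τ).mulVec (X τ)‖ ≤ matNorm (C u τ) * ‖X τ‖ :=
          norm_mulVec_le _ _
        have hδ2' : δ ≤ δ₂ := le_trans (min_le_left _ _) (min_le_right _ _)
        have h2 : matNorm (C u τ) ≤ matNorm (C x τ) + η / (M * (x+1)) :=
          hnC u τ hτ.1 hτ.2 hu.1.le (by linarith [hu.2])
        have h3 : ‖X τ‖ ≤ M := hMb τ hτ.1 hτ.2
        calc ‖(C u τ).mulVec (X τ)‖ ≤ matNorm (C u τ) * ‖X τ‖ := h1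
          _ ≤ (matNorm (C x τ) + η / (M * (x+1))) * M := by
              apply mul_le_mul h2 h3 (norm_nonneg _)
              linarith [matNorm_nonneg (C x τ), hη₂.le]
          _ = M * (matNorm (C x τ) + η / (M * (x+1))) := by ring
      have := intervalIntegral.norm_integral_le_of_norm_le_const hb
      rwa [abs_of_nonneg (by linarith)] at this
    have hnCs : ContinuousOn (fun τ => matNorm (C x τ)) (Icc 0 x) := by
      have h1 : ContinuousOn (fun τ : ℝ => ((x : ℝ), τ)) (Icc 0 x) :=
        (continuous_const.prodMk continuous_id).continuousOn
      have h2 := (contOn_nC hC).comp h1 (fun τ hτ => ⟨hτ.1, hτ.2⟩)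
      simpa [Function.comp_def] using h2
    have hg_int : IntervalIntegrable
        (fun τ => (M * (matNorm (C x τ) + η / (M * (x+1)))) * (z - x)) volume 0 x := by
      refine (ContinuousOn.mono ?_ (by rw [uIcc_of_le hx0])).intervalIntegrable
      exact (continuousOn_const.mul (hnCs.add continuousOn_const)).mul continuousOn_const
    have hae : ∀ᵐ τ ∂volume.restrict (Set.uIoc (0:ℝ) x),
        ‖(B z τ).mulVec (X τ) - (B x τ).mulVec (X τ)‖
        ≤ (M * (matNorm (C x τ) + η / (M * (x+1)))) * (z - x) := by
      rw [MeasureTheory.ae_restrict_iff' measurableSet_uIoc]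
      refine Filter.Eventually.of_forall ?_
      intro τ hτ
      rw [Set.uIoc_of_le hx0] at hτ
      exact hpt τ ⟨hτ.1.le, hτ.2⟩
    have hle := intervalIntegral.norm_integral_le_abs_of_norm_le hae hg_int
    -- compute the bounding integral
    have hInCs : IntervalIntegrable (fun τ => matNorm (C x τ)) volume 0 x :=
      (hnCs.mono (by rw [uIcc_of_le hx0])).intervalIntegrable
    have hval : (∫ τ in (0:ℝ)..x, (M * (matNorm (C x τ) + η / (M * (x+1)))) * (z - x))
        = (M * (z - x)) * (∫ σ in (0:ℝ)..x, matNorm (C x σ))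
          + x * (M * (η / (M * (x+1))) * (z - x)) := by
      have efun : (fun τ => (M * (matNorm (C x τ) + η / (M * (x+1)))) * (z - x))
          = fun τ => (M * (z - x)) * matNorm (C x τ) + (M * (η / (M * (x+1))) * (z - x)) := by
        funext τ; ring
      rw [efun, intervalIntegral.integral_add (hInCs.const_mul _) intervalIntegrable_const,
        intervalIntegral.integral_const_mul, intervalIntegral.integral_const]
      rw [smul_eq_mul, sub_zero]
    have hsmall : M * (η / (M * (x+1))) * x ≤ η := by
      have e1 : M * (η / (M * (x+1))) = η / (x+1) := by
        have hMne : M ≠ 0 := hM0.ne'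
        have hx1 : (x + 1) ≠ 0 := by intro hcon; linarith [hx0]
        field_simp
      rw [e1, div_mul_eq_mul_div, div_le_iff₀ (by linarith)]
      nlinarith
    have habs : |(∫ τ in (0:ℝ)..x, (M * (matNorm (C x τ) + η / (M * (x+1)))) * (z - x))|
        = (M * (z - x)) * (∫ σ in (0:ℝ)..x, matNorm (C x σ))
          + x * (M * (η / (M * (x+1))) * (z - x)) := by
      rw [hval]
      refine abs_of_nonneg ?_
      have t1 : 0 ≤ (M * (z - x)) * (∫ σ in (0:ℝ)..x, matNorm (C x σ)) := by
        apply mul_nonneg (by nlinarith) hcfnonneg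
      have t2 : (0:ℝ) ≤ x * (M * (η / (M * (x+1))) * (z - x)) := by positivity
      linarith
    rw [habs] at hle
    refine le_trans hle ?_
    have expand : (M * (∫ σ in (0:ℝ)..x, matNorm (C x σ)) + η) * (z - x)
        = (M * (z - x)) * (∫ σ in (0:ℝ)..x, matNorm (C x σ)) + η * (z - x) := by ring
    rw [expand]
    have : x * (M * (η / (M * (x+1))) * (z - x)) ≤ η * (z - x) := by
      have e2 : x * (M * (η / (M * (x+1))) * (z - x)) = (M * (η / (M * (x+1))) * x) * (z - x) := by
        ring
      rw [e2]
      exact mul_le_mul_of_nonneg_right hsmall (by linarith)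
    linarith
  -- R3 bound
  have hR3 : ‖F z - F x‖ ≤ (‖F' x‖ + η) * (z - x) := by
    have hftc : (∫ u in x..z, F' u) = F z - F x :=
      intervalIntegral.integral_eq_sub_of_hasDerivAt (fun u _ => hF u)
        (hF'c.intervalIntegrable x z)
    rw [← hftc]
    have hb : ∀ u ∈ Set.uIoc x z, ‖F' u‖ ≤ ‖F' x‖ + η := by
      intro u hu
      rw [Set.uIoc_of_le hxz.le] at hu
      have hδ3' : δ ≤ δ₃ := le_trans (min_le_right _ _) (min_le_right _ _)
      refine (hF'δ ?_).le
      rw [Real.dist_eq, abs_of_nonneg (by linarith [hu.1])]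
      linarith [hu.2]
    have := intervalIntegral.norm_integral_le_of_norm_le_const hb
    rwa [abs_of_nonneg (by linarith)] at this
  -- conclude
  have hqm : qfun (matCLM n (B x x)) (z - x) * ‖X x‖
      ≤ matLogNorm (B x x) * ‖X x‖ + η := by
    have hδh : δ ≤ h₀ := le_trans (min_le_right _ _) (min_le_left _ _)
    have hmono := qfun_mono (matCLM n (B x x)) hzx0 (by linarith : z - x ≤ h₀)
    exact le_trans (mul_le_mul_of_nonneg_right hmono hmx0) hq₀
  have c1 : (z - x) * (qfun (matCLM n (B x x)) (z - x) * ‖X x‖)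
      ≤ (z - x) * (matLogNorm (B x x) * ‖X x‖ + η) :=
    mul_le_mul_of_nonneg_left hqm (by linarith)
  have hslope_eq : slope (fun s => ‖X s‖) x z = (‖X z‖ - ‖X x‖) / (z - x) := by
    rw [slope_def_field]
  rw [hslope_eq, div_lt_iff₀ hzx0]
  nlinarith [hnorm, hA, hR1, hR2, hR3, c1, mul_pos hη hzx0]

lemma cf_contOn {n : ℕ} {C : ℝ → ℝ → Matrix (Fin n) (Fin n) ℝ}
    (hC : ContinuousOn (fun p : ℝ × ℝ => C p.1 p.2) {p : ℝ × ℝ | 0 ≤ p.2 ∧ p.2 ≤ p.1}) :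
    ContinuousOn (fun s => ∫ σ in (0:ℝ)..s, matNorm (C s σ)) (Ici 0) := by
  intro x hx
  have hx0 : (0:ℝ) ≤ x := hx
  rw [Metric.continuousWithinAt_iff]
  intro η hη
  set S : Set (ℝ × ℝ) := {p : ℝ × ℝ | 0 ≤ p.2 ∧ p.2 ≤ p.1} with hS
  set R : ℝ := x + 1 with hRdef
  have hR0 : (0:ℝ) ≤ R := by rw [hRdef]; linarith
  set K : Set (ℝ × ℝ) := S ∩ (Icc 0 R ×ˢ Icc 0 R) with hKdef
  have hKcomp : IsCompact K := ((isCompact_Icc.prod isCompact_Icc).inter_left Sclosed)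
  have hcont : ContinuousOn (fun p : ℝ × ℝ => matNorm (C p.1 p.2)) K :=
    (contOn_nC hC).mono inter_subset_left
  have hUC := hKcomp.uniformContinuousOn_of_continuous hcont
  obtain ⟨Mb, hMb⟩ := hKcomp.exists_bound_of_continuousOn hcont
  have hMb0 : 0 ≤ Mb := by
    have := hMb (x, x) ⟨⟨hx0, le_rfl⟩, ⟨⟨hx0, by linarith⟩, ⟨hx0, by linarith⟩⟩⟩
    exact le_trans (norm_nonneg _) this
  have hη₁ : (0:ℝ) < η/(2*(R+1)) := by positivity
  obtain ⟨δ₁, hδ₁, hδ⟩ := Metric.uniformContinuousOn_iff.mp hUC _ hη₁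
  set δ : ℝ := min δ₁ (min 1 (η/(2*(Mb+1)))) with hδdef
  have hδpos : 0 < δ := by rw [hδdef]; positivity
  refine ⟨δ, hδpos, ?_⟩
  intro s hs hdist
  have hs0 : (0:ℝ) ≤ s := hs
  -- key two-point estimate
  have key : ∀ a b : ℝ, 0 ≤ a → a ≤ b → b ≤ R → b - a < δ →
      |(∫ σ in (0:ℝ)..b, matNorm (C b σ)) - (∫ σ in (0:ℝ)..a, matNorm (C a σ))| < η := by
    intro a b ha0 hab hbR hba
    have hslice : ∀ w : ℝ, 0 ≤ w → w ≤ R →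
        ContinuousOn (fun τ => matNorm (C w τ)) (Icc 0 w) := by
      intro w hw0 hwR
      have h1 : ContinuousOn (fun τ : ℝ => ((w:ℝ), τ)) (Icc 0 w) :=
        (continuous_const.prodMk continuous_id).continuousOn
      have h2 := (contOn_nC hC).comp h1 (fun τ hτ => ⟨hτ.1, hτ.2⟩)
      simpa [Function.comp_def] using h2
    have hb0 : (0:ℝ) ≤ b := le_trans ha0 hab
    have hi1 : IntervalIntegrable (fun τ => matNorm (C b τ)) MeasureTheory.volume 0 a := by
      refine ((hslice b hb0 hbR).mono ?_).intervalIntegrable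
      rw [uIcc_of_le ha0]; exact Icc_subset_Icc le_rfl hab
    have hi2 : IntervalIntegrable (fun τ => matNorm (C b τ)) MeasureTheory.volume a b := by
      refine ((hslice b hb0 hbR).mono ?_).intervalIntegrable
      rw [uIcc_of_le hab]; exact Icc_subset_Icc ha0 le_rfl
    have hi3 : IntervalIntegrable (fun τ => matNorm (C a τ)) MeasureTheory.volume 0 a := by
      refine ((hslice a ha0 (le_trans hab hbR)).mono ?_).intervalIntegrable
      rw [uIcc_of_le ha0]
    have hsplit : (∫ σ in (0:ℝ)..b, matNorm (C b σ))
        = (∫ σ in (0:ℝ)..a, matNorm (C b σ)) + ∫ σ in a..b, matNorm (C b σ) :=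
      (intervalIntegral.integral_add_adjacent_intervals hi1 hi2).symm
    have hdiff : (∫ σ in (0:ℝ)..a, matNorm (C b σ)) - (∫ σ in (0:ℝ)..a, matNorm (C a σ))
        = ∫ σ in (0:ℝ)..a, (matNorm (C b σ) - matNorm (C a σ)) :=
      (intervalIntegral.integral_sub hi1 hi3).symm
    have hbound1 : ‖∫ σ in (0:ℝ)..a, (matNorm (C b σ) - matNorm (C a σ))‖
        ≤ η/(2*(R+1)) * |a - 0| := by
      refine intervalIntegral.norm_integral_le_of_norm_le_const ?_
      intro τ hτ
      rw [Set.uIoc_of_le ha0] at hτ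
      have hmem1 : (b, τ) ∈ K := ⟨⟨hτ.1.le, le_trans hτ.2 hab⟩,
        ⟨⟨hb0, hbR⟩, ⟨hτ.1.le, le_trans hτ.2 (le_trans hab hbR)⟩⟩⟩
      have hmem2 : (a, τ) ∈ K := ⟨⟨hτ.1.le, hτ.2⟩,
        ⟨⟨ha0, le_trans hab hbR⟩, ⟨hτ.1.le, le_trans hτ.2 (le_trans hab hbR)⟩⟩⟩
      have hd : dist (b, τ) (a, τ) < δ₁ := by
        rw [Prod.dist_eq]
        simp only [dist_self]
        rw [max_eq_left dist_nonneg, Real.dist_eq, abs_of_nonneg (by linarith)]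
        exact lt_of_lt_of_le hba (by rw [hδdef]; exact min_le_left _ _)
      have := hδ _ hmem1 _ hmem2 hd
      rw [Real.dist_eq] at this
      exact this.le
    have hbound2 : ‖∫ σ in a..b, matNorm (C b σ)‖ ≤ Mb * |b - a| := by
      refine intervalIntegral.norm_integral_le_of_norm_le_const ?_
      intro τ hτ
      rw [Set.uIoc_of_le hab] at hτ
      exact hMb (b, τ) ⟨⟨le_trans ha0 hτ.1.le, hτ.2⟩,
        ⟨⟨hb0, hbR⟩, ⟨le_trans ha0 hτ.1.le, le_trans hτ.2 hbR⟩⟩⟩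
    rw [hsplit]
    have e1 : |a - 0| = a := by rw [sub_zero, abs_of_nonneg ha0]
    have e2 : |b - a| = b - a := abs_of_nonneg (by linarith)
    rw [e1] at hbound1; rw [e2] at hbound2
    have h1 := (abs_le.mp ((Real.norm_eq_abs _) ▸ hbound1)).2
    have h1' := (abs_le.mp ((Real.norm_eq_abs _) ▸ hbound1)).1
    have h2 := (abs_le.mp ((Real.norm_eq_abs _) ▸ hbound2)).2
    have h2' := (abs_le.mp ((Real.norm_eq_abs _) ▸ hbound2)).1
    have e3 : η/(2*(R+1)) * a < η/2 := by
      rw [div_mul_eq_mul_div, div_lt_div_iff₀ (by positivity) (by norm_num)]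
      nlinarith
    have e4 : Mb * (b - a) ≤ η/2 := by
      have hba' : b - a < η/(2*(Mb+1)) :=
        lt_of_lt_of_le hba (by rw [hδdef]; exact le_trans (min_le_right _ _) (min_le_right _ _))
      have : Mb * (b - a) ≤ (Mb + 1) * (η/(2*(Mb+1))) := by
        apply mul_le_mul (by linarith) hba'.le (by linarith) (by linarith)
      calc Mb * (b - a) ≤ (Mb + 1) * (η/(2*(Mb+1))) := this
        _ = η/2 := by field_simp
    have hd1 : (∫ σ in (0:ℝ)..a, matNorm (C b σ)) - (∫ σ in (0:ℝ)..a, matNorm (C a σ))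
        ≤ η/(2*(R+1)) * a := by rw [hdiff]; exact h1
    have hd1' : -(η/(2*(R+1)) * a) ≤ (∫ σ in (0:ℝ)..a, matNorm (C b σ))
        - (∫ σ in (0:ℝ)..a, matNorm (C a σ)) := by rw [hdiff]; exact h1'
    have ha1 : 0 ≤ η/(2*(R+1)) * a := by positivity
    have hMba : 0 ≤ Mb * (b - a) := mul_nonneg hMb0 (by linarith)
    rw [abs_lt]
    constructor
    · nlinarith
    · nlinarith
  rcases le_total s x with hsx | hxs
  · rw [Real.dist_eq] at hdist ⊢
    rw [abs_sub_comm]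
    refine key s x hs0 hsx (by rw [hRdef]; linarith) ?_
    rw [abs_of_nonpos (by linarith)] at hdist
    linarith
  · rw [Real.dist_eq] at hdist ⊢
    refine key x s hx0 hxs ?_ ?_
    · rw [abs_of_nonneg (by linarith)] at hdist
      have : δ ≤ 1 := by rw [hδdef]; exact le_trans (min_le_right _ _) (min_le_left _ _)
      rw [hRdef]; linarith
    · rw [abs_of_nonneg (by linarith)] at hdist
      linarith

end VolterraAux

open VolterraAux

/-- Theorem 1: stability of the Volterra integral system with respect to right-hand-side
perturbations. Let `ε > 0`, `B(t, τ)` be `C¹` in `t` with `C(t, τ) = ∂ₜB(t, τ)`, and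
`F ∈ C¹` with `F(0) = 0` and `sup_{t ≥ 0} ‖F'(t)‖ ≤ ε`. If for all `0 ≤ t' < t` we have
`Λ(B(t,t)) + (1/(t−t')) ∫_{t'}^{t} ψ*(τ) dτ < 0` where
`ψ*(s) = ∫₀ˢ ‖C(s,τ)‖ dτ + ‖F'(s)‖/ε`, then every continuous solution `X` of
`X(t) = ∫₀ᵗ B(t,τ) X(τ) dτ + F(t)` satisfies `‖X(t)‖ ≤ ε` for all `t ≥ 0`. -/
theorem volterra_integral_stability {n : ℕ} (ε : ℝ) (hε : 0 < ε)
    (B C : ℝ → ℝ → Matrix (Fin n) (Fin n) ℝ)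
    (hB : ContinuousOn (fun p : ℝ × ℝ => B p.1 p.2) {p : ℝ × ℝ | 0 ≤ p.2 ∧ p.2 ≤ p.1})
    (hBt : ∀ τ t : ℝ, 0 ≤ τ → τ ≤ t → ∀ i j,
      HasDerivAt (fun u => B u τ i j) (C t τ i j) t)
    (hC : ContinuousOn (fun p : ℝ × ℝ => C p.1 p.2) {p : ℝ × ℝ | 0 ≤ p.2 ∧ p.2 ≤ p.1})
    (F F' : ℝ → (Fin n → ℝ))
    (hF : ∀ t : ℝ, HasDerivAt F (F' t) t) (hF'c : Continuous F')
    (hF0 : F 0 = 0) (hF'bound : ∀ t : ℝ, 0 ≤ t → ‖F' t‖ ≤ ε)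
    (hcond : ∀ t' t : ℝ, 0 ≤ t' → t' < t →
      matLogNorm (B t t) + (1 / (t - t')) *
        (∫ τ in t'..t, (∫ σ in (0 : ℝ)..τ, matNorm (C τ σ)) + ‖F' τ‖ / ε) < 0)
    (X : ℝ → (Fin n → ℝ)) (hXc : ContinuousOn X (Set.Ici 0))
    (hX : ∀ t : ℝ, 0 ≤ t → X t = (∫ τ in (0 : ℝ)..t, (B t τ).mulVec (X τ)) + F t) :
    ∀ t : ℝ, 0 ≤ t → ‖X t‖ ≤ ε := by

  intro t ht
  rcases Nat.eq_zero_or_pos n with hn | hn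
  · have hXt : X t = 0 := funext fun i => by subst hn; exact i.elim0
    rw [hXt, norm_zero]; exact hε.le
  haveI : Nonempty (Fin n) := Fin.pos_iff_nonempty.mp hn
  by_contra hcon
  push_neg at hcon
  have hm0 : ‖X 0‖ = 0 := by
    have h0 := hX 0 le_rfl
    rw [intervalIntegral.integral_same, hF0, zero_add] at h0
    rw [h0, norm_zero]
  obtain ⟨w, hw, hwmax⟩ := isCompact_Icc.exists_isMaxOn (nonempty_Icc.mpr ht)
    ((hXc.mono (fun s (hs : s ∈ Icc 0 t) => hs.1)).norm)
  have hwmax' : ∀ s ∈ Icc 0 t, ‖X s‖ ≤ ‖X w‖ := fun s hs => hwmax hs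
  have hMgt : ε < ‖X w‖ := lt_of_lt_of_le hcon (hwmax' t ⟨ht, le_rfl⟩)
  have hM0 : 0 < ‖X w‖ := lt_trans hε hMgt
  have hdiag : ContinuousOn (fun s : ℝ => B s s) (Ici 0) := by
    have h1 : ContinuousOn (fun s : ℝ => (s, s)) (Ici 0) :=
      (continuous_id.prodMk continuous_id).continuousOn
    have h2 := hB.comp h1 (fun s (hs : s ∈ Ici 0) => ⟨hs, le_rfl⟩)
    simpa [Function.comp_def] using h2
  have hΛcont : ContinuousOn (fun s => matLogNorm (B s s)) (Ici 0) := by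
    have h3 : ContinuousOn (fun s => matCLM n (B s s)) (Ici 0) :=
      (matCLM_continuous n).comp_continuousOn hdiag
    have h4 := (lipschitzWith_logNorm (E := Fin n → ℝ)).continuous.comp_continuousOn h3
    simpa [matLogNorm_eq, Function.comp_def] using h4
  -- pointwise consequence of the averaged condition
  have hψ : ∀ x : ℝ, 0 < x →
      ε * matLogNorm (B x x) + ε * (∫ σ in (0:ℝ)..x, matNorm (C x σ)) + ‖F' x‖ ≤ 0 := by
    intro x hx
    have hψle : matLogNorm (B x x)
        + ((∫ σ in (0:ℝ)..x, matNorm (C x σ)) + ‖F' x‖ / ε) ≤ 0 := by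
      by_contra hcon0
      push_neg at hcon0
      have hψc : ContinuousOn
          (fun s => (∫ σ in (0:ℝ)..s, matNorm (C s σ)) + ‖F' s‖ / ε) (Ici 0) :=
        (cf_contOn hC).add ((hF'c.norm.div_const ε).continuousOn)
      have hca : ContinuousAt
          (fun s => (∫ σ in (0:ℝ)..s, matNorm (C s σ)) + ‖F' s‖ / ε) x :=
        hψc.continuousAt (Ici_mem_nhds hx)
      set a : ℝ := matLogNorm (B x x)
        + ((∫ σ in (0:ℝ)..x, matNorm (C x σ)) + ‖F' x‖ / ε) with hadef
      obtain ⟨δ, hδpos, hδ⟩ := Metric.continuousAt_iff.mp hca (a/2)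
        (by rw [hadef] at hcon0; linarith)
      set t' : ℝ := max 0 (x - δ/2) with ht'def
      have ht'0 : 0 ≤ t' := le_max_left _ _
      have ht'x : t' < x := max_lt hx (by linarith)
      have ht'ge : x - δ/2 ≤ t' := le_max_right _ _
      have hIint : IntervalIntegrable
          (fun τ => (∫ σ in (0:ℝ)..τ, matNorm (C τ σ)) + ‖F' τ‖ / ε) volume t' x := by
        refine ((hψc.mono ?_).intervalIntegrable)
        rw [uIcc_of_le ht'x.le]
        exact fun τ hτ => le_trans ht'0 hτ.1
      have hlow : ∀ τ ∈ Icc t' x,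
          ((∫ σ in (0:ℝ)..x, matNorm (C x σ)) + ‖F' x‖ / ε) - a/2
          ≤ (∫ σ in (0:ℝ)..τ, matNorm (C τ σ)) + ‖F' τ‖ / ε := by
        intro τ hτ
        have hd : dist τ x < δ := by
          rw [Real.dist_eq, abs_of_nonpos (by linarith [hτ.2])]
          linarith [hτ.1]
        have h2 := hδ hd
        rw [Real.dist_eq] at h2
        have h3 := abs_lt.mp h2
        linarith [h3.1]
      have hmono := intervalIntegral.integral_mono_on ht'x.le
        intervalIntegrable_const hIint hlow
      rw [intervalIntegral.integral_const, smul_eq_mul] at hmono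
      have hcnd := hcond t' x ht'0 ht'x
      have hpos : (0:ℝ) < x - t' := by linarith
      have h6 : ((∫ σ in (0:ℝ)..x, matNorm (C x σ)) + ‖F' x‖ / ε) - a/2
          ≤ (1 / (x - t')) * ∫ τ in t'..x,
            ((∫ σ in (0:ℝ)..τ, matNorm (C τ σ)) + ‖F' τ‖ / ε) := by
        have h5 := mul_le_mul_of_nonneg_left hmono (le_of_lt (one_div_pos.mpr hpos))
        calc ((∫ σ in (0:ℝ)..x, matNorm (C x σ)) + ‖F' x‖ / ε) - a/2
            = (1 / (x - t')) * ((x - t')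
              * (((∫ σ in (0:ℝ)..x, matNorm (C x σ)) + ‖F' x‖ / ε) - a/2)) := by
              rw [← mul_assoc, one_div, inv_mul_cancel₀ hpos.ne', one_mul]
          _ ≤ _ := h5
      have hcon0' : 0 < a := hcon0
      rw [hadef] at hcon0'
      linarith [hcnd, h6, hcon0', hadef]
    have h7 := mul_le_mul_of_nonneg_left hψle hε.le
    have e : ε * (matLogNorm (B x x) + ((∫ σ in (0:ℝ)..x, matNorm (C x σ)) + ‖F' x‖ / ε))
        = ε * matLogNorm (B x x) + ε * (∫ σ in (0:ℝ)..x, matNorm (C x σ)) + ‖F' x‖ := by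
      field_simp
      ring
    rw [e, mul_zero] at h7
    exact h7
  have hcf0 : ∀ x : ℝ, 0 ≤ x → (0:ℝ) ≤ ∫ σ in (0:ℝ)..x, matNorm (C x σ) := fun x hx0 =>
    intervalIntegral.integral_nonneg hx0 (fun σ _ => matNorm_nonneg _)
  have hΛ0 : ∀ x : ℝ, 0 < x → matLogNorm (B x x) ≤ 0 := by
    intro x hx
    have h1 := hψ x hx
    nlinarith [hcf0 x hx.le, norm_nonneg (F' x)]
  have hΛInt : ∀ s : ℝ, 0 ≤ s →
      IntervalIntegrable (fun u => matLogNorm (B u u)) volume 0 s := by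
    intro s hs
    refine (hΛcont.mono ?_).intervalIntegrable
    rw [uIcc_of_le hs]; exact fun u hu => hu.1
  have hEc : ContinuousOn (fun s => ∫ u in (0:ℝ)..s, matLogNorm (B u u)) (Icc 0 t) := by
    have h1 : IntegrableOn (fun u => matLogNorm (B u u)) (uIcc 0 t) volume := by
      rw [uIcc_of_le ht]
      exact (hΛcont.mono (fun u hu => hu.1)).integrableOn_Icc
    have h2 := intervalIntegral.continuousOn_primitive_interval h1
    rwa [uIcc_of_le ht] at h2
  -- the key bound for every positive δ
  have key : ∀ δ : ℝ, 0 < δ →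
      ‖X w‖ * Real.exp (∫ u in (0:ℝ)..w, matLogNorm (B u u)) ≤ δ * (1 + w) := by
    intro δ hδ
    have comp := image_le_of_liminf_slope_right_lt_deriv_boundary'
      (f := fun s => ‖X s‖)
      (f' := fun x => matLogNorm (B x x) * ‖X x‖
        + ‖X w‖ * (∫ σ in (0:ℝ)..x, matNorm (C x σ)) + ‖F' x‖)
      (a := 0) (b := t)
      (B := fun s => δ * (1 + s)
        + ‖X w‖ * (1 - Real.exp (∫ u in (0:ℝ)..s, matLogNorm (B u u))))
      (B' := fun x => δ - ‖X w‖
        * (Real.exp (∫ u in (0:ℝ)..x, matLogNorm (B u u)) * matLogNorm (B x x)))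
      ?_ ?_ ?_ ?_ ?_ ?_
    · have hcomp : ‖X w‖ ≤ δ * (1 + w) + ‖X w‖
          * (1 - Real.exp (∫ u in (0:ℝ)..w, matLogNorm (B u u))) := comp hw
      linarith [hcomp]
    · exact (hXc.mono (fun s (hs : s ∈ Icc 0 t) => hs.1)).norm
    · intro x hx r hr
      exact slope_est hB hBt hC hF hF'c hXc hX hM0 hx.1
        (fun τ hτ0 hτx => hwmax' τ ⟨hτ0, le_trans hτx hx.2.le⟩) hr
    · show ‖X 0‖ ≤ δ * (1 + 0) + ‖X w‖
        * (1 - Real.exp (∫ u in (0:ℝ)..0, matLogNorm (B u u)))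
      rw [hm0, intervalIntegral.integral_same, Real.exp_zero]
      norm_num
      positivity
    · refine (continuousOn_const.mul (continuousOn_const.add continuousOn_id)).add
        (continuousOn_const.mul (continuousOn_const.sub ?_))
      exact Real.continuous_exp.comp_continuousOn hEc
    · intro x hx
      have hintΛ : IntervalIntegrable (fun u => matLogNorm (B u u)) volume 0 x :=
        hΛInt x hx.1
      have hmeas : StronglyMeasurableAtFilter
          (fun u => matLogNorm (B u u)) (𝓝[>] x) volume := by
        refine AEStronglyMeasurable.stronglyMeasurableAtFilter_of_mem
          (s := Ioc x (x+1)) ?_ ?_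
        · refine (hΛcont.mono ?_).aestronglyMeasurable measurableSet_Ioc
          exact fun u hu => le_trans hx.1 hu.1.le
        · exact Ioc_mem_nhdsGT_of_mem ⟨le_rfl, by linarith⟩
      have hcw : ContinuousWithinAt (fun u => matLogNorm (B u u)) (Ioi x) x :=
        (hΛcont x hx.1).mono (fun u hu => le_trans hx.1 (le_of_lt hu))
      have hE' : HasDerivWithinAt (fun s => ∫ u in (0:ℝ)..s, matLogNorm (B u u))
          (matLogNorm (B x x)) (Ici x) x :=
        intervalIntegral.integral_hasDerivWithinAt_right hintΛ hmeas hcw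
      have hexp := hE'.exp
      have h1 : HasDerivWithinAt (fun s : ℝ => δ * (1 + s)) (δ * 1) (Ici x) x :=
        ((hasDerivWithinAt_id x (Ici x)).const_add (1:ℝ)).const_mul δ
      have h2 : HasDerivWithinAt
          (fun s => ‖X w‖ * (1 - Real.exp (∫ u in (0:ℝ)..s, matLogNorm (B u u))))
          (‖X w‖ * (0 - Real.exp (∫ u in (0:ℝ)..x, matLogNorm (B u u))
            * matLogNorm (B x x))) (Ici x) x :=
        (((hasDerivWithinAt_const x (Ici x) (1:ℝ)).sub hexp)).const_mul _
      have hsum := h1.fun_add h2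
      exact hsum.congr_deriv (by ring)
    · intro x hx heq
      have heq' : ‖X x‖ = δ * (1 + x) + ‖X w‖
          * (1 - Real.exp (∫ u in (0:ℝ)..x, matLogNorm (B u u))) := heq
      show matLogNorm (B x x) * ‖X x‖
          + ‖X w‖ * (∫ σ in (0:ℝ)..x, matNorm (C x σ)) + ‖F' x‖
        < δ - ‖X w‖ * (Real.exp (∫ u in (0:ℝ)..x, matLogNorm (B u u)) * matLogNorm (B x x))
      clear heq
      rcases eq_or_lt_of_le hx.1 with h0 | h0
      · exfalso
        rw [← h0] at heq'
        rw [hm0, intervalIntegral.integral_same, Real.exp_zero] at heq'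
        norm_num at heq'
        linarith
      · have hψx := hψ x h0
        have hΛx0 : matLogNorm (B x x) ≤ 0 := hΛ0 x h0
        have hexp0 : 0 < Real.exp (∫ u in (0:ℝ)..x, matLogNorm (B u u)) := Real.exp_pos _
        have hA2 : ‖X w‖ * (ε * matLogNorm (B x x)
              + ε * (∫ σ in (0:ℝ)..x, matNorm (C x σ)))
            ≤ ‖X w‖ * (-‖F' x‖) :=
          mul_le_mul_of_nonneg_left (by linarith) (norm_nonneg _)
        have hgoalε : ε * (‖X w‖ * (∫ σ in (0:ℝ)..x, matNorm (C x σ)) + ‖F' x‖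
            + ‖X w‖ * matLogNorm (B x x)) ≤ 0 := by
          nlinarith [norm_nonneg (F' x), hMgt]
        have hMkey : ‖X w‖ * (∫ σ in (0:ℝ)..x, matNorm (C x σ)) + ‖F' x‖
            + ‖X w‖ * matLogNorm (B x x) ≤ 0 := by
          by_contra hpos
          push_neg at hpos
          nlinarith [mul_pos hε hpos]
        have h2 : matLogNorm (B x x) * ‖X x‖ - ‖X w‖ * matLogNorm (B x x)
            = matLogNorm (B x x) * (δ*(1+x))
              - matLogNorm (B x x) * (‖X w‖
                * Real.exp (∫ u in (0:ℝ)..x, matLogNorm (B u u))) := by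
          rw [heq']; ring
        have h3 : matLogNorm (B x x) * (δ*(1+x)) ≤ 0 :=
          mul_nonpos_of_nonpos_of_nonneg hΛx0 (by nlinarith [hx.1])
        have h4 : matLogNorm (B x x) * (‖X w‖
              * Real.exp (∫ u in (0:ℝ)..x, matLogNorm (B u u)))
            = ‖X w‖ * (Real.exp (∫ u in (0:ℝ)..x, matLogNorm (B u u))
              * matLogNorm (B x x)) := by ring
        linarith [hMkey, h2, h3, h4, hδ]
  -- conclude
  have h1w : 0 < 1 + w := by linarith [hw.1]
  have hP : 0 < ‖X w‖ * Real.exp (∫ u in (0:ℝ)..w, matLogNorm (B u u)) :=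
    mul_pos hM0 (Real.exp_pos _)
  have hkey2 := key ((‖X w‖ * Real.exp (∫ u in (0:ℝ)..w, matLogNorm (B u u)))
    / (2 * (1 + w))) (by positivity)
  have he : (‖X w‖ * Real.exp (∫ u in (0:ℝ)..w, matLogNorm (B u u))) / (2 * (1 + w))
      * (1 + w) = (‖X w‖ * Real.exp (∫ u in (0:ℝ)..w, matLogNorm (B u u))) / 2 := by
    field_simp
  rw [he] at hkey2
  linarith [hkey2, hP]
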